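/- arXiv:1607.00576 — 4 statements merged into one kernel-verified Lean document; each statement's English description precedes it below -/
import Mathlib

section
/- The projective distance satisfies the triangle inequality: for any nonzero x, y, z in R^3, dist(x,z) ≤ dist(x,y) + dist(y,z), where dist(a,b) = ||a ∧ b||/(||a|| ||b||). -/
noncomputable section

/-- Cross product in ℝ³. -/
def cross3 (x y : Fin 3 → ℝ) : Fin 3 → ℝ :=
  ![x 1 * y 2 - x 2 * y 1, x 2 * y 0 - x 0 * y 2, x 0 * y 1 - x 1 * y 0]

/-- Scalar product in ℝ³. -/
def dot3 (x y : Fin 3 → ℝ) : ℝ := x 0 * y 0 + x 1 * y 1 + x 2 * y 2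

/-- Euclidean norm in ℝ³. -/
def nrm (x : Fin 3 → ℝ) : ℝ := Real.sqrt (dot3 x x)

/-- Projective distance between nonzero vectors of ℝ³. -/
def pdist (x y : Fin 3 → ℝ) : ℝ := nrm (cross3 x y) / (nrm x * nrm y)

/-- The canonical map ℤ³ → ℝ³. -/
def toR (x : Fin 3 → ℤ) : Fin 3 → ℝ := fun i => (x i : ℝ)

/-- Determinant of three vectors of ℝ³. -/
def det3 (a b c : Fin 3 → ℝ) : ℝ :=
  a 0 * (b 1 * c 2 - b 2 * c 1) - a 1 * (b 0 * c 2 - b 2 * c 0) + a 2 * (b 0 * c 1 - b 1 * c 0)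

/-- Determinant of three vectors of ℤ³. -/
def det3Z (a b c : Fin 3 → ℤ) : ℤ :=
  a 0 * (b 1 * c 2 - b 2 * c 1) - a 1 * (b 0 * c 2 - b 2 * c 0) + a 2 * (b 0 * c 1 - b 1 * c 0)

/-- Cross product of integer vectors. -/
def crossZ (x y : Fin 3 → ℤ) : Fin 3 → ℤ :=
  ![x 1 * y 2 - x 2 * y 1, x 2 * y 0 - x 0 * y 2, x 0 * y 1 - x 1 * y 0]

/-- A point of ℤ³ is primitive if its coordinates are coprime (in particular it is nonzero). -/
def IsPrimitive (x : Fin 3 → ℤ) : Prop := Int.gcd (Int.gcd (x 0) (x 1)) (x 2) = 1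

/-- A pair of points of ℤ³ is primitive if their cross product is a primitive point. -/
def PrimPair (x y : Fin 3 → ℤ) : Prop := IsPrimitive (crossZ x y)

/-- The golden ratio. -/
def γ : ℝ := (1 + Real.sqrt 5) / 2

lemma lag (x y : Fin 3 → ℝ) :
    dot3 x x * dot3 y y = dot3 x y ^ 2 + dot3 (cross3 x y) (cross3 x y) := by
  simp [dot3, cross3]; ring

lemma grass (x y z : Fin 3 → ℝ) :
    dot3 (cross3 x y) (cross3 x y) * dot3 (cross3 y z) (cross3 y z)
      = dot3 (cross3 x y) (cross3 y z) ^ 2 + det3 x y z ^ 2 * dot3 y y := by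
  simp [dot3, cross3, det3]; ring

lemma quad (x y z : Fin 3 → ℝ) :
    dot3 y y ^ 2 * dot3 (cross3 x z) (cross3 x z)
      = dot3 y z ^ 2 * dot3 (cross3 x y) (cross3 x y)
        + dot3 x y ^ 2 * dot3 (cross3 y z) (cross3 y z)
        + det3 x y z ^ 2 * dot3 y y
        + 2 * dot3 x y * dot3 y z * dot3 (cross3 x y) (cross3 y z) := by
  simp [dot3, cross3, det3]; ring

lemma dot3_self_nonneg (x : Fin 3 → ℝ) : 0 ≤ dot3 x x := by
  unfold dot3
  nlinarith [mul_self_nonneg (x 0), mul_self_nonneg (x 1), mul_self_nonneg (x 2)]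

lemma nrm_nonneg (x : Fin 3 → ℝ) : 0 ≤ nrm x := Real.sqrt_nonneg _

lemma nrm_sq (x : Fin 3 → ℝ) : nrm x ^ 2 = dot3 x x :=
  Real.sq_sqrt (dot3_self_nonneg x)

lemma nrm_pos (x : Fin 3 → ℝ) (hx : x ≠ 0) : 0 < nrm x := by
  refine Real.sqrt_pos.mpr (lt_of_le_of_ne (dot3_self_nonneg x) (Ne.symm ?_))
  intro h0
  apply hx
  unfold dot3 at h0
  have h00 : x 0 = 0 := mul_self_eq_zero.mp (le_antisymm
    (by nlinarith [mul_self_nonneg (x 1), mul_self_nonneg (x 2)]) (mul_self_nonneg _))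
  have h01 : x 1 = 0 := mul_self_eq_zero.mp (le_antisymm
    (by nlinarith [mul_self_nonneg (x 0), mul_self_nonneg (x 2)]) (mul_self_nonneg _))
  have h02 : x 2 = 0 := mul_self_eq_zero.mp (le_antisymm
    (by nlinarith [mul_self_nonneg (x 0), mul_self_nonneg (x 1)]) (mul_self_nonneg _))
  funext i
  fin_cases i <;> simpa using ‹_›

set_option maxHeartbeats 1000000 in
/-- Triangle inequality for the projective distance. -/
theorem stmt1 (x y z : Fin 3 → ℝ) (hx : x ≠ 0) (hy : y ≠ 0) (hz : z ≠ 0) :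
    pdist x z ≤ pdist x y + pdist y z := by
  unfold pdist
  have ha : 0 < nrm x := nrm_pos x hx
  have hb : 0 < nrm y := nrm_pos y hy
  have hc : 0 < nrm z := nrm_pos z hz
  set a := nrm x with ha'
  set b := nrm y with hb'
  set c := nrm z with hc'
  set P := nrm (cross3 x y) with hP'
  set Q := nrm (cross3 y z) with hQ'
  set R := nrm (cross3 x z) with hR'
  set p := dot3 x y with hp'
  set q := dot3 y z with hq'
  set s := dot3 (cross3 x y) (cross3 y z) with hs'
  set d := det3 x y z with hd'
  have hP0 : 0 ≤ P := nrm_nonneg _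
  have hQ0 : 0 ≤ Q := nrm_nonneg _
  have hR0 : 0 ≤ R := nrm_nonneg _
  clear_value a b c P Q R p q s d
  -- identities in scalar form
  have h1 : a ^ 2 * b ^ 2 = p ^ 2 + P ^ 2 := by
    rw [ha', hb', hP', hp', nrm_sq, nrm_sq, nrm_sq]; exact lag x y
  have h2 : b ^ 2 * c ^ 2 = q ^ 2 + Q ^ 2 := by
    rw [hb', hc', hQ', hq', nrm_sq, nrm_sq, nrm_sq]; exact lag y z
  have h3 : P ^ 2 * Q ^ 2 = s ^ 2 + d ^ 2 * b ^ 2 := by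
    rw [hP', hQ', hb', hs', hd', nrm_sq, nrm_sq, nrm_sq]; exact grass x y z
  have h4 : b ^ 4 * R ^ 2 = q ^ 2 * P ^ 2 + p ^ 2 * Q ^ 2 + d ^ 2 * b ^ 2
      + 2 * p * q * s := by
    have := quad x y z
    rw [hb', hR', hP', hQ', hp', hq', hs', hd']
    rw [nrm_sq, nrm_sq, nrm_sq, nrm_sq]
    rw [show nrm y ^ 4 = dot3 y y ^ 2 by rw [← nrm_sq]; ring]
    linarith [this]
  -- auxiliary T
  set T := Real.sqrt (p ^ 2 * Q ^ 2 + d ^ 2 * b ^ 2) with hT'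
  have hT0 : 0 ≤ T := Real.sqrt_nonneg _
  have hT2 : T ^ 2 = p ^ 2 * Q ^ 2 + d ^ 2 * b ^ 2 := Real.sq_sqrt (by positivity)
  clear_value T
  clear ha' hb' hc' hP' hQ' hR' hp' hq' hs' hd' hT' hx hy hz x y z
  -- |p*s| ≤ P*T
  have e1 : (P * T) ^ 2 = (p * s) ^ 2 + (p ^ 2 + P ^ 2) * (d ^ 2 * b ^ 2) := by
    rw [mul_pow, hT2]; linear_combination p ^ 2 * h3
  have hPT0 : 0 ≤ P * T := mul_nonneg hP0 hT0
  have habs1 : |p * s| ≤ P * T := by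
    rw [abs_le]
    constructor <;> nlinarith [sq_nonneg p, sq_nonneg P, sq_nonneg (d * b)]
  have habs2 : |q| ≤ b * c := by
    rw [abs_le]
    constructor <;> nlinarith [sq_nonneg Q, mul_pos hb hc]
  have h5 : p * q * s ≤ (P * T) * (b * c) := by
    calc p * q * s ≤ |p * s| * |q| := by
          rw [← abs_mul]; calc p * q * s ≤ |p * q * s| := le_abs_self _
            _ = |p * s * q| := by ring_nf
      _ ≤ (P * T) * (b * c) :=
          mul_le_mul habs1 habs2 (abs_nonneg _) hPT0
  -- (b^2 R)^2 ≤ (b c P + T)^2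
  have key2 : (b ^ 2 * R) ^ 2 ≤ (b * c * P + T) ^ 2 := by
    nlinarith [h4, hT2, h5, h2, sq_nonneg (Q * P)]
  have key3 : b ^ 2 * R ≤ b * c * P + T := by
    nlinarith [mul_nonneg (mul_nonneg hb.le hc.le) hP0, hT0,
      mul_nonneg (mul_nonneg hb.le hb.le) hR0]
  have hTle : T ≤ a * b * Q := by
    have h6 : T ^ 2 ≤ (a * b * Q) ^ 2 := by nlinarith [sq_nonneg s]
    nlinarith [mul_nonneg (mul_nonneg ha.le hb.le) hQ0]
  have key : R * b ≤ P * c + Q * a := by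
    have : b ^ 2 * R ≤ b * c * P + a * b * Q := le_trans key3 (by linarith)
    nlinarith [hb]
  -- conclude
  have hab : (a * b) ≠ 0 := by positivity
  have hbc : (b * c) ≠ 0 := by positivity
  have hsum : P / (a * b) + Q / (b * c) = (P * c + Q * a) / (a * b * c) := by
    field_simp
  rw [hsum, div_le_div_iff₀ (by positivity) (by positivity)]
  nlinarith [mul_le_mul_of_nonneg_right key (mul_nonneg ha.le hc.le)]
end
end

section
/- Let u, v, w be unit vectors in R^3 with u·v = u·w = 0, and set v⊥ = u ∧ v, w⊥ = u ∧ w. Then for any nonzero x in R^3, min(|x·v⊥|, |x·w⊥|) ≤ ||x|| · dist(x,{v,w}) ≤ |x·u| + min(|x·v⊥|, |x·w⊥|), where dist(x,{v,w}) = min(dist(x,v), dist(x,w)). -/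
noncomputable section

lemma key_id (u v x : Fin 3 → ℝ) (huu : dot3 u u = 1) (hvv : dot3 v v = 1) (huv : dot3 u v = 0) :
    dot3 (cross3 x v) (cross3 x v) = dot3 x u ^ 2 + dot3 x (cross3 u v) ^ 2 := by
  simp only [dot3, cross3, Matrix.cons_val_zero, Matrix.cons_val_one, Matrix.head_cons,
    Matrix.cons_val_two, Matrix.tail_cons] at *
  linear_combination ((x 0*v 0 + x 1*v 1 + x 2*v 2)^2 - (x 0*x 0+x 1*x 1+x 2*x 2)*(v 0*v 0+v 1*v 1+v 2*v 2)) * huu + (x 0*u 0+x 1*u 1+x 2*u 2)^2 * hvv + ((x 0*x 0+x 1*x 1+x 2*x 2)*(u 0*v 0+u 1*v 1+u 2*v 2) - 2*(x 0*u 0+x 1*u 1+x 2*u 2)*(x 0*v 0+x 1*v 1+x 2*v 2)) * huv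

lemma unit_dot (u : Fin 3 → ℝ) (hu : nrm u = 1) : dot3 u u = 1 := by
  have := Real.sq_sqrt (dot3_self_nonneg u)
  unfold nrm at hu
  nlinarith

lemma main_one (u v x : Fin 3 → ℝ) (hu : nrm u = 1) (hv : nrm v = 1)
    (huv : dot3 u v = 0) (hx : x ≠ 0) :
    |dot3 x (cross3 u v)| ≤ nrm x * pdist x v ∧
      nrm x * pdist x v ≤ |dot3 x u| + |dot3 x (cross3 u v)| := by
  have hA : nrm x * pdist x v = nrm (cross3 x v) := by
    unfold pdist
    rw [hv, mul_one]
    field_simp [(nrm_pos x hx).ne']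
  have hid := key_id u v x (unit_dot u hu) (unit_dot v hv) huv
  have hcr : nrm (cross3 x v) = Real.sqrt (dot3 x u ^ 2 + dot3 x (cross3 u v) ^ 2) := by
    unfold nrm; rw [hid]
  rw [hA, hcr]
  set a := dot3 x u
  set c := dot3 x (cross3 u v)
  constructor
  · rw [show |c| = Real.sqrt (c ^ 2) by rw [Real.sqrt_sq_eq_abs]]
    exact Real.sqrt_le_sqrt (by nlinarith [sq_nonneg a])
  · rw [show |a| + |c| = Real.sqrt ((|a| + |c|) ^ 2) by
      rw [Real.sqrt_sq (by positivity)]]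
    exact Real.sqrt_le_sqrt (by nlinarith [abs_nonneg a, abs_nonneg c, sq_abs a, sq_abs c, mul_nonneg (abs_nonneg a) (abs_nonneg c)])

/-- Lemma 1 of the paper. -/
theorem stmt3 (u v w : Fin 3 → ℝ) (hu : nrm u = 1) (hv : nrm v = 1) (hw : nrm w = 1)
    (huv : dot3 u v = 0) (huw : dot3 u w = 0) (x : Fin 3 → ℝ) (hx : x ≠ 0) :
    min |dot3 x (cross3 u v)| |dot3 x (cross3 u w)| ≤ nrm x * min (pdist x v) (pdist x w) ∧
      nrm x * min (pdist x v) (pdist x w) ≤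
        |dot3 x u| + min |dot3 x (cross3 u v)| |dot3 x (cross3 u w)| := by
  obtain ⟨hv1, hv2⟩ := main_one u v x hu hv huv hx
  obtain ⟨hw1, hw2⟩ := main_one u w x hu hw huw hx
  have hmul : nrm x * min (pdist x v) (pdist x w) = min (nrm x * pdist x v) (nrm x * pdist x w) := by
    rw [mul_min_of_nonneg _ _ (nrm_pos x hx).le]
  rw [hmul]
  constructor
  · exact le_min ((min_le_left _ _).trans hv1) ((min_le_right _ _).trans hw1)
  · rcases le_total |dot3 x (cross3 u v)| |dot3 x (cross3 u w)| with h | h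
    · rw [min_eq_left h]
      exact (min_le_left _ _).trans hv2
    · rw [min_eq_right h]
      exact (min_le_right _ _).trans hw2
end
end

section
/- Let α be a real number such that |qα - p| ≥ 1/(C₁|q|) for all integers p, q with q ≠ 0, for some constant C₁ > 1. Let p_n, q_n be integers with gcd(p_n, q_n) = 1, q_n ≥ 1, and |q_n α - p_n| < 1/q_{n+1} where q_{n+1} > q_n. Then for any integers p, q with 1 ≤ |q| < q_n, one has |q p_n - p q_n| ≥ q_n/(2 C₁ |q|). -/
noncomputable section

/-- Lemma 2 of the paper. -/
theorem stmt4 (α C₁ : ℝ) (hC : 1 < C₁)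
    (hbad : ∀ p q : ℤ, q ≠ 0 → 1 / (C₁ * |(q : ℝ)|) ≤ |(q : ℝ) * α - (p : ℝ)|)
    (pn qn qn1 : ℤ) (hcop : IsCoprime pn qn) (hqn : 1 ≤ qn) (hlt : qn < qn1)
    (happ : |(qn : ℝ) * α - (pn : ℝ)| < 1 / (qn1 : ℝ))
    (p q : ℤ) (hq1 : 1 ≤ |q|) (hqlt : |q| < qn) :
    (qn : ℝ) / (2 * C₁ * |(q : ℝ)|) ≤ |((q * pn - p * qn : ℤ) : ℝ)| := by
  have hq0 : q ≠ 0 := by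
    intro h; rw [h] at hq1; simp at hq1
  have hd : q * pn - p * qn ≠ 0 := by
    intro h
    have heq : q * pn = p * qn := by linarith [sub_eq_zero.mp h]
    have h1 : qn ∣ q * pn := ⟨p, by linarith⟩
    have hqq : qn ∣ q := hcop.symm.dvd_of_dvd_mul_right h1
    have := Int.le_of_dvd (abs_pos.mpr hq0) ((dvd_abs qn q).mpr hqq)
    omega
  -- positivity facts
  have hC0 : (0:ℝ) < C₁ := by linarith
  have Qpos : (0:ℝ) < |(q:ℝ)| := by
    rw [← Int.cast_abs]; exact_mod_cast lt_of_lt_of_le one_pos (by exact_mod_cast hq1)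
  have qnpos : (0:ℝ) < (qn:ℝ) := by exact_mod_cast lt_of_lt_of_le one_pos (by exact_mod_cast hqn)
  have qn1pos : (0:ℝ) < (qn1:ℝ) := by exact_mod_cast lt_trans (by exact_mod_cast hqn : (0:ℤ) < qn) hlt
  have hdone : (1:ℝ) ≤ |((q * pn - p * qn : ℤ) : ℝ)| := by
    rw [← Int.cast_abs]; exact_mod_cast Int.one_le_abs hd
  by_cases hcase : (qn : ℝ) ≤ 2 * C₁ * |(q:ℝ)|
  · have : (qn:ℝ) / (2 * C₁ * |(q:ℝ)|) ≤ 1 := by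
      rw [div_le_one (by positivity)]; linarith
    linarith
  · push_neg at hcase
    have hA := hbad p q hq0
    have hA' : 1 ≤ |(q:ℝ) * α - (p:ℝ)| * (C₁ * |(q:ℝ)|) := by
      rw [← div_le_iff₀ (by positivity)]; exact hA
    have hB' : |(qn : ℝ) * α - (pn : ℝ)| * (qn1:ℝ) < 1 := by
      rw [← lt_div_iff₀ qn1pos]; exact happ
    have hQle : |(q:ℝ)| ≤ (qn1:ℝ) := by
      rw [← Int.cast_abs]; exact_mod_cast le_of_lt (lt_trans hqlt hlt)
    have key : ((q * pn - p * qn : ℤ) : ℝ)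
        = (q:ℝ) * ((pn:ℝ) - (qn:ℝ)*α) + (qn:ℝ) * ((q:ℝ)*α - (p:ℝ)) := by
      push_cast; ring
    have habs : ∀ a b : ℝ, |b| - |a| ≤ |a + b| := by
      intro a b
      have h := abs_sub_abs_le_abs_sub b (-a)
      simpa [sub_neg_eq_add, add_comm] using h
    have hlow : (qn:ℝ) * |(q:ℝ)*α - (p:ℝ)| - |(q:ℝ)| * |(qn:ℝ)*α - (pn:ℝ)|
        ≤ |((q * pn - p * qn : ℤ) : ℝ)| := by
      rw [key]
      have h := habs ((q:ℝ) * ((pn:ℝ) - (qn:ℝ)*α)) ((qn:ℝ) * ((q:ℝ)*α - (p:ℝ)))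
      rw [abs_mul, abs_mul, abs_of_pos qnpos, abs_sub_comm ((pn:ℝ)) ((qn:ℝ)*α)] at h
      linarith
    rw [div_le_iff₀ (by positivity)]
    have hBnn : 0 ≤ |(qn : ℝ) * α - (pn : ℝ)| := abs_nonneg _
    have hQB : |(q:ℝ)| * |(qn : ℝ) * α - (pn : ℝ)| < 1 := by
      calc |(q:ℝ)| * |(qn : ℝ) * α - (pn : ℝ)| ≤ (qn1:ℝ) * |(qn : ℝ) * α - (pn : ℝ)| := by
            exact mul_le_mul_of_nonneg_right hQle hBnn
        _ < 1 := by linarith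
    nlinarith [mul_le_mul_of_nonneg_left hlow (by positivity : (0:ℝ) ≤ 2*C₁*|(q:ℝ)|),
      mul_pos Qpos qnpos, abs_nonneg ((q:ℝ)*α - (p:ℝ)),
      mul_lt_mul_of_pos_left hQB (mul_pos (mul_pos two_pos hC0) Qpos)]
end
end

section
/- For points x, y in Z^3, the following are equivalent: (i) x ∧ y is a primitive point of Z^3 (nonzero with coprime coordinates); (ii) (x, y) is a basis of the group Z^3 ∩ span_R(x,y); (iii) there exists z in Z^3 such that (x, y, z) is a basis of Z^3. -/
noncomputable section

/-- All the 2×2 minors of a pair of integer vectors are divisible by `p` if the coordinates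
of their cross product are. -/
lemma minors_dvd (p : ℤ) (x y : Fin 3 → ℤ)
    (hc : ∀ i, p ∣ crossZ x y i) : ∀ i j, p ∣ (y i * x j - x i * y j) := by
  obtain ⟨k0, hk0⟩ := hc 0
  obtain ⟨k1, hk1⟩ := hc 1
  obtain ⟨k2, hk2⟩ := hc 2
  simp only [crossZ, Matrix.cons_val_zero, Matrix.cons_val_one, Matrix.head_cons,
    Matrix.cons_val_two, Matrix.tail_cons] at hk0 hk1 hk2
  intro i j
  fin_cases i <;> fin_cases j
  · show p ∣ (y 0 * x 0 - x 0 * y 0)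
    exact ⟨0, by ring⟩
  · show p ∣ (y 0 * x 1 - x 0 * y 1)
    exact ⟨-k2, by linear_combination -hk2⟩
  · show p ∣ (y 0 * x 2 - x 0 * y 2)
    exact ⟨k1, by linear_combination hk1⟩
  · show p ∣ (y 1 * x 0 - x 1 * y 0)
    exact ⟨k2, by linear_combination hk2⟩
  · show p ∣ (y 1 * x 1 - x 1 * y 1)
    exact ⟨0, by ring⟩
  · show p ∣ (y 1 * x 2 - x 1 * y 2)
    exact ⟨-k0, by linear_combination -hk0⟩
  · show p ∣ (y 2 * x 0 - x 2 * y 0)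
    exact ⟨-k1, by linear_combination -hk1⟩
  · show p ∣ (y 2 * x 1 - x 2 * y 1)
    exact ⟨k0, by linear_combination hk0⟩
  · show p ∣ (y 2 * x 2 - x 2 * y 2)
    exact ⟨0, by ring⟩

/-- Equivalent characterizations of primitive pairs in ℤ³. -/
theorem stmt6 (x y : Fin 3 → ℤ) :
    List.TFAE [
      IsPrimitive (crossZ x y),
      LinearIndependent ℝ ![toR x, toR y] ∧
        ∀ z : Fin 3 → ℤ, (∃ a b : ℝ, toR z = a • toR x + b • toR y) →
          ∃ m n : ℤ, z = m • x + n • y,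
      ∃ z : Fin 3 → ℤ, det3Z x y z = 1 ∨ det3Z x y z = -1] := by
  tfae_have 1 → 3 := by
    intro h1
    unfold IsPrimitive at h1
    have e1 := Int.gcd_eq_gcd_ab (crossZ x y 0) (crossZ x y 1)
    have e2 := Int.gcd_eq_gcd_ab ((Int.gcd (crossZ x y 0) (crossZ x y 1) : ℤ)) (crossZ x y 2)
    rw [h1] at e2
    push_cast at e2
    set s := Int.gcdA (crossZ x y 0) (crossZ x y 1) with hs
    set t := Int.gcdB (crossZ x y 0) (crossZ x y 1) with ht
    set u := Int.gcdA ((Int.gcd (crossZ x y 0) (crossZ x y 1) : ℤ)) (crossZ x y 2) with hu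
    set v := Int.gcdB ((Int.gcd (crossZ x y 0) (crossZ x y 1) : ℤ)) (crossZ x y 2) with hv
    refine ⟨![s * u, t * u, v], Or.inl ?_⟩
    simp only [crossZ, det3Z, Matrix.cons_val_zero, Matrix.cons_val_one, Matrix.head_cons,
      Matrix.cons_val_two, Matrix.tail_cons] at e1 e2 ⊢
    linear_combination -e2 - u * e1
  tfae_have 3 → 2 := by
    rintro ⟨z, hz⟩
    have hdR : ((det3Z x y z : ℤ) : ℝ) = 1 ∨ ((det3Z x y z : ℤ) : ℝ) = -1 := by
      rcases hz with h | h <;> [left; right] <;> rw [h] <;> norm_num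
    have hdne : ((det3Z x y z : ℤ) : ℝ) ≠ 0 := by
      rcases hdR with h | h <;> rw [h] <;> norm_num
    constructor
    · rw [LinearIndependent.pair_iff]
      intro s t hst
      have e : ∀ i, s * ((x i : ℤ) : ℝ) + t * ((y i : ℤ) : ℝ) = 0 := by
        intro i
        have := congrFun hst i
        simpa [toR] using this
      have hs : s * ((det3Z x y z : ℤ) : ℝ) = 0 := by
        push_cast [det3Z]
        linear_combination ((z 0 : ℤ) : ℝ) * (((y 2 : ℤ) : ℝ) * e 1 - ((y 1 : ℤ) : ℝ) * e 2)
          + ((z 1 : ℤ) : ℝ) * (((y 0 : ℤ) : ℝ) * e 2 - ((y 2 : ℤ) : ℝ) * e 0)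
          + ((z 2 : ℤ) : ℝ) * (((y 1 : ℤ) : ℝ) * e 0 - ((y 0 : ℤ) : ℝ) * e 1)
      have ht : t * ((det3Z x y z : ℤ) : ℝ) = 0 := by
        push_cast [det3Z]
        linear_combination ((z 0 : ℤ) : ℝ) * (((x 1 : ℤ) : ℝ) * e 2 - ((x 2 : ℤ) : ℝ) * e 1)
          + ((z 1 : ℤ) : ℝ) * (((x 2 : ℤ) : ℝ) * e 0 - ((x 0 : ℤ) : ℝ) * e 2)
          + ((z 2 : ℤ) : ℝ) * (((x 0 : ℤ) : ℝ) * e 1 - ((x 1 : ℤ) : ℝ) * e 0)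
      exact ⟨(mul_eq_zero.mp hs).resolve_right hdne, (mul_eq_zero.mp ht).resolve_right hdne⟩
    · rintro w ⟨a, b, hw⟩
      have e : ∀ i, ((w i : ℤ) : ℝ) = a * ((x i : ℤ) : ℝ) + b * ((y i : ℤ) : ℝ) := by
        intro i
        have := congrFun hw i
        simpa [toR] using this
      have ha : ((det3Z w y z : ℤ) : ℝ) = a * ((det3Z x y z : ℤ) : ℝ) := by
        push_cast [det3Z]
        linear_combination (((y 1 : ℤ) : ℝ) * ((z 2 : ℤ) : ℝ) - ((y 2 : ℤ) : ℝ) * ((z 1 : ℤ) : ℝ)) * e 0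
          - (((y 0 : ℤ) : ℝ) * ((z 2 : ℤ) : ℝ) - ((y 2 : ℤ) : ℝ) * ((z 0 : ℤ) : ℝ)) * e 1
          + (((y 0 : ℤ) : ℝ) * ((z 1 : ℤ) : ℝ) - ((y 1 : ℤ) : ℝ) * ((z 0 : ℤ) : ℝ)) * e 2
      have hb : ((det3Z x w z : ℤ) : ℝ) = b * ((det3Z x y z : ℤ) : ℝ) := by
        push_cast [det3Z]
        linear_combination (((x 2 : ℤ) : ℝ) * ((z 1 : ℤ) : ℝ) - ((x 1 : ℤ) : ℝ) * ((z 2 : ℤ) : ℝ)) * e 0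
          + (((x 0 : ℤ) : ℝ) * ((z 2 : ℤ) : ℝ) - ((x 2 : ℤ) : ℝ) * ((z 0 : ℤ) : ℝ)) * e 1
          + (((x 1 : ℤ) : ℝ) * ((z 0 : ℤ) : ℝ) - ((x 0 : ℤ) : ℝ) * ((z 1 : ℤ) : ℝ)) * e 2
      obtain ⟨m, hm⟩ : ∃ m : ℤ, a = (m : ℝ) := by
        rcases hz with h | h
        · exact ⟨det3Z w y z, by rw [h] at ha; push_cast at ha; linarith⟩
        · exact ⟨-det3Z w y z, by rw [h] at ha; push_cast at ha ⊢; linarith⟩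
      obtain ⟨n, hn⟩ : ∃ n : ℤ, b = (n : ℝ) := by
        rcases hz with h | h
        · exact ⟨det3Z x w z, by rw [h] at hb; push_cast at hb; linarith⟩
        · exact ⟨-det3Z x w z, by rw [h] at hb; push_cast at hb ⊢; linarith⟩
      refine ⟨m, n, funext fun i => ?_⟩
      have hi := e i
      rw [hm, hn] at hi
      have : ((w i : ℤ) : ℝ) = (((m * x i + n * y i : ℤ)) : ℝ) := by push_cast; linarith
      have h2 : w i = m * x i + n * y i := by exact_mod_cast this
      simpa [Pi.add_apply, Pi.smul_apply, smul_eq_mul] using h2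
  tfae_have 2 → 1 := by
    rintro ⟨hli, hsat⟩
    unfold IsPrimitive
    by_contra hg
    obtain ⟨p, hp, hpg⟩ := Nat.exists_prime_and_dvd hg
    have hpz : ((p : ℤ)) ∣ ((Int.gcd (Int.gcd (crossZ x y 0) (crossZ x y 1)) (crossZ x y 2) : ℕ) : ℤ) :=
      Int.natCast_dvd_natCast.mpr hpg
    have hpc : ∀ i, (p : ℤ) ∣ crossZ x y i := by
      intro i
      fin_cases i
      · exact dvd_trans hpz (dvd_trans (Int.gcd_dvd_left _ _) (Int.gcd_dvd_left _ _))
      · exact dvd_trans hpz (dvd_trans (Int.gcd_dvd_left _ _) (Int.gcd_dvd_right _ _))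
      · exact dvd_trans hpz (Int.gcd_dvd_right _ _)
    have hpR : ((p : ℕ) : ℝ) ≠ 0 := Nat.cast_ne_zero.mpr hp.ne_zero
    have key : ∃ a b : ℤ, ¬((p : ℤ) ∣ a ∧ (p : ℤ) ∣ b) ∧ ∀ j, (p : ℤ) ∣ (a * x j + b * y j) := by
      by_cases hx : ∀ i, (p : ℤ) ∣ x i
      · refine ⟨1, 0, fun h => ?_, fun j => by simpa using hx j⟩
        exact (Int.prime_iff_natAbs_prime.mpr (by simpa using hp)).not_dvd_one h.1
      · push_neg at hx
        obtain ⟨i, hxi⟩ := hx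
        refine ⟨y i, -x i, fun h => hxi (dvd_neg.mp h.2), fun j => ?_⟩
        rw [neg_mul, ← sub_eq_add_neg]
        exact minors_dvd (p : ℤ) x y hpc i j
    obtain ⟨a, b, hab, hdvd⟩ := key
    choose q hq using hdvd
    have hq' : toR q = ((a : ℝ) / (p : ℝ)) • toR x + ((b : ℝ) / (p : ℝ)) • toR y := by
      funext j
      have h := hq j
      have h2 : ((a : ℝ)) * ((x j : ℤ) : ℝ) + (b : ℝ) * ((y j : ℤ) : ℝ) = ((p : ℕ) : ℝ) * ((q j : ℤ) : ℝ) := by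
        exact_mod_cast congrArg (fun r : ℤ => (r : ℝ)) h
      show ((q j : ℤ) : ℝ) = (a : ℝ) / (p : ℝ) * ((x j : ℤ) : ℝ) + (b : ℝ) / (p : ℝ) * ((y j : ℤ) : ℝ)
      rw [div_mul_eq_mul_div, div_mul_eq_mul_div, ← add_div, eq_div_iff hpR]
      linarith
    obtain ⟨m, n, hmn⟩ := hsat q ⟨(a : ℝ) / (p : ℝ), (b : ℝ) / (p : ℝ), hq'⟩
    have hmnR : ∀ j, ((q j : ℤ) : ℝ) = (m : ℝ) * ((x j : ℤ) : ℝ) + (n : ℝ) * ((y j : ℤ) : ℝ) := by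
      intro j
      have := congrFun hmn j
      simp only [Pi.add_apply, Pi.smul_apply, smul_eq_mul] at this
      exact_mod_cast congrArg (fun r : ℤ => (r : ℝ)) this
    have hz := LinearIndependent.pair_iff.mp hli ((a : ℝ) / (p : ℝ) - (m : ℝ)) ((b : ℝ) / (p : ℝ) - (n : ℝ))
      (by
        funext j
        have e1 := congrFun hq' j
        simp only [Pi.add_apply, Pi.smul_apply, smul_eq_mul, toR] at e1
        have e2 := hmnR j
        simp only [Pi.add_apply, Pi.smul_apply, smul_eq_mul, toR, Pi.zero_apply]
        linear_combination e2 - e1)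
    have hma : a = (p : ℤ) * m := by
      have h1 := sub_eq_zero.mp hz.1
      have : (a : ℝ) = ((p : ℕ) : ℝ) * (m : ℝ) := by
        rw [mul_comm]; exact (div_eq_iff hpR).mp h1
      exact_mod_cast this
    have hnb : b = (p : ℤ) * n := by
      have h1 := sub_eq_zero.mp hz.2
      have : (b : ℝ) = ((p : ℕ) : ℝ) * (n : ℝ) := by
        rw [mul_comm]; exact (div_eq_iff hpR).mp h1
      exact_mod_cast this
    exact hab ⟨⟨m, hma⟩, ⟨n, hnb⟩⟩
  tfae_finish
end
end
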